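/- Assume f is twice differentiable, satisfies the cubic upper bound and the Taylor gradient bound with constant L_H > 0, and ‖∇f(z)‖ ≤ U_g for all z ∈ ℝⁿ. Let ζ ∈ (0,1), η ∈ (0, (1−ζ)/2), θ ∈ (0,1), τ̂ ≥ 1, δ ∈ [0,1], ε_g, ε_h ∈ (0,1), and x ∈ ℝⁿ with J := {i : |x_i| > √ε_g} nonempty. Let ḡ ∈ ℝⁿ be given by ḡ_i = g(x)_i for i ∈ J and ḡ_i = 0 otherwise, and assume ḡ ≠ 0. Let τ > 0 satisfy 2ε_h ≤ τ·‖ḡ‖^δ ≤ 2τ̂·ε_h. Let d ∈ ℝⁿ with d_i = 0 for i ∉ J, and let r̂ ∈ ℝⁿ be the vector with r̂_i = (∇²f(x)·d)_i + τ·‖ḡ‖^δ·d_i + ḡ_i for i ∈ J and r̂_i = 0 otherwise. Assume (a) ⟨d, ∇²f(x)·d⟩ + τ·‖ḡ‖^δ·‖d‖² ≥ ε_h·‖d‖², (b) ‖d‖ ≤ 1.1·ε_h⁻¹·‖ḡ‖, and (c) ‖r̂‖ ≤ (ζ/2)·ε_h·‖d‖. Then there exists a smallest nonnegative integer j* with φ(x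 + θ^{j*}d) < φ(x) − η·θ^{2j*}·ε_h·‖d‖²; and with x⁺ := x + θ^{j*}d and g⁺ ∈ ℝⁿ defined by g⁺_i = g(x⁺)_i for i ∈ J and g⁺_i = 0 otherwise, one has φ(x) − φ(x⁺) ≥ c_sol·min{‖g⁺‖²·ε_h⁻¹, ε_h³, ε_g·ε_h}, where c_sol = η·min{ (4/(√((ζ + 4τ̂)² + 8L_H) + (ζ + 4τ̂)))², 9(1 − ζ − 2η)²·θ²/L_H², θ², (1 − ζ)²·θ²/(4·max{L_H/3, 2η}²) }. -/

import Mathlib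

open scoped RealInnerProductSpace

noncomputable section

/-- `ℝⁿ` with the Euclidean norm. -/
abbrev E (n : ℕ) := EuclideanSpace ℝ (Fin n)

/-- The vector `g(x)` measuring first-order stationarity of `f + lam‖·‖₁`. -/
def gvec (n : ℕ) (f : E n → ℝ) (lam : ℝ) (x : E n) : E n := WithLp.toLp 2 fun i =>
  if 0 < x i then gradient f x i + lam
  else if x i < 0 then gradient f x i - lam
  else gradient f x i - min (max (-lam) (gradient f x i)) lam

/-- The proximal-gradient residual `G_t(x) = t (x - prox_{(lam/t)‖·‖₁}(x - ∇f(x)/t))`. -/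
def Gres (n : ℕ) (f : E n → ℝ) (lam t : ℝ) (x : E n) : E n := WithLp.toLp 2 fun i =>
  if (gradient f x i + lam) / t < x i then gradient f x i + lam
  else if x i < (gradient f x i - lam) / t then gradient f x i - lam
  else t * x i

/-- The proximal-gradient update `P_t(x) = prox_{(lam/t)‖·‖₁}(x - ∇f(x)/t)` (soft-thresholding). -/
def Pt (n : ℕ) (f : E n → ℝ) (lam t : ℝ) (x : E n) : E n := WithLp.toLp 2 fun i =>
  if lam / t < x i - gradient f x i / t then x i - gradient f x i / t - lam / t
  else if x i - gradient f x i / t < -(lam / t) then x i - gradient f x i / t + lam / t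
  else 0

/-- The objective `φ(x) = f(x) + lam ‖x‖₁`. -/
def phi (n : ℕ) (f : E n → ℝ) (lam : ℝ) (x : E n) : ℝ := f x + lam * ∑ i, |x i|

/-- The Hessian of `f` at `x`, as a continuous linear map. -/
def hess (n : ℕ) (f : E n → ℝ) (x : E n) : E n →L[ℝ] E n := fderiv ℝ (gradient f) x

/-- The scaling map `S_{x,ε}`: identity on coordinates with `|x_i| > √ε`, multiplication by
`x_i` on the others. -/
def Smap (n : ℕ) (x : E n) (eps : ℝ) (u : E n) : E n := WithLp.toLp 2 fun i =>
  if Real.sqrt eps < |x i| then u i else x i * u i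

/-- The relaxed first-order residual vector `g^ε(x)`. -/
def gveps (n : ℕ) (f : E n → ℝ) (lam eps : ℝ) (x : E n) : E n := WithLp.toLp 2 fun i =>
  if Real.sqrt eps < x i then gradient f x i + lam
  else if x i < -Real.sqrt eps then gradient f x i - lam
  else gradient f x i -
    min (max (-(lam + eps ^ ((3:ℝ)/4))) (gradient f x i)) (lam + eps ^ ((3:ℝ)/4))

/-- A Newton-CG step with an approximate solution of the regularized Newton
equation: under the Capped-CG guarantees (a)–(c), the line search terminates at a smallest
`j*` and the decrease is at least `c_sol · min{‖g⁺‖² ε_h⁻¹, ε_h³, ε_g ε_h}`. -/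

lemma inner_sum' {n : ℕ} (u v : E n) : ⟪u, v⟫ = ∑ i, u i * v i := by
  simp [PiLp.inner_apply, RCLike.inner_apply, conj_trivial]
  exact Finset.sum_congr rfl fun i _ => mul_comm _ _

lemma abs_coord_le_norm {n : ℕ} (u : E n) (i : Fin n) : |u i| ≤ ‖u‖ := by
  have h := EuclideanSpace.norm_eq u
  have h1 : |u i| ^ 2 ≤ ∑ j, ‖u j‖ ^ 2 := by
    have := Finset.single_le_sum (f := fun j => ‖u j‖ ^ 2)
      (fun j _ => by positivity) (Finset.mem_univ i)
    simpa [Real.norm_eq_abs] using this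
  calc |u i| = Real.sqrt (|u i| ^ 2) := by rw [Real.sqrt_sq (abs_nonneg _)]
    _ ≤ Real.sqrt (∑ j, ‖u j‖ ^ 2) := Real.sqrt_le_sqrt h1
    _ = ‖u‖ := by rw [h]

lemma norm_le_norm_of_abs_le {n : ℕ} {u v : E n} (h : ∀ i, |u i| ≤ |v i|) : ‖u‖ ≤ ‖v‖ := by
  rw [EuclideanSpace.norm_eq, EuclideanSpace.norm_eq]
  apply Real.sqrt_le_sqrt
  apply Finset.sum_le_sum
  intro i _
  have := h i
  simp only [Real.norm_eq_abs]
  nlinarith [abs_nonneg (u i), abs_nonneg (v i)]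

set_option maxHeartbeats 4000000 in
theorem stmt13 {n : ℕ} (f : E n → ℝ) (hf1 : Differentiable ℝ f)
    (hf2 : Differentiable ℝ (gradient f)) (lam : ℝ) (hlam : 0 < lam)
    (LH : ℝ) (hLH : 0 < LH)
    (hcubic : ∀ x y : E n, f y ≤ f x + ⟪gradient f x, y - x⟫ +
      1 / 2 * ⟪y - x, hess n f x (y - x)⟫ + LH / 6 * ‖y - x‖ ^ 3)
    (htaylor : ∀ x y : E n,
      ‖gradient f y - gradient f x - hess n f x (y - x)‖ ≤ LH / 2 * ‖y - x‖ ^ 2)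
    (Ug : ℝ) (hUg : ∀ z : E n, ‖gradient f z‖ ≤ Ug)
    (ζ η θ τh δ εg εh : ℝ) (hζ : ζ ∈ Set.Ioo (0:ℝ) 1) (hη : η ∈ Set.Ioo (0:ℝ) ((1 - ζ)/2))
    (hθ : θ ∈ Set.Ioo (0:ℝ) 1) (hτh : 1 ≤ τh) (hδ : δ ∈ Set.Icc (0:ℝ) 1)
    (hεg : εg ∈ Set.Ioo (0:ℝ) 1) (hεh : εh ∈ Set.Ioo (0:ℝ) 1)
    (x : E n) (hJ : ∃ i, Real.sqrt εg < |x i|)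
    (gbar : E n)
    (hgbar : ∀ i, gbar i = if Real.sqrt εg < |x i| then gvec n f lam x i else 0)
    (hgbar0 : gbar ≠ 0)
    (τ : ℝ) (hτpos : 0 < τ)
    (hτlo : 2 * εh ≤ τ * ‖gbar‖ ^ δ) (hτhi : τ * ‖gbar‖ ^ δ ≤ 2 * τh * εh)
    (d : E n) (hd0 : ∀ i, |x i| ≤ Real.sqrt εg → d i = 0)
    (rhat : E n)
    (hrhat : ∀ i, rhat i = if Real.sqrt εg < |x i| then
        hess n f x d i + τ * ‖gbar‖ ^ δ * d i + gbar i else 0)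
    (ha : εh * ‖d‖ ^ 2 ≤ ⟪d, hess n f x d⟫ + τ * ‖gbar‖ ^ δ * ‖d‖ ^ 2)
    (hb : ‖d‖ ≤ 1.1 * εh⁻¹ * ‖gbar‖)
    (hc : ‖rhat‖ ≤ ζ / 2 * εh * ‖d‖) :
    ∃ j : ℕ,
      (phi n f lam (x + θ ^ j • d) <
          phi n f lam x - η * θ ^ (2 * j) * εh * ‖d‖ ^ 2) ∧
      (∀ j' < j, ¬(phi n f lam (x + θ ^ j' • d) <
          phi n f lam x - η * θ ^ (2 * j') * εh * ‖d‖ ^ 2)) ∧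
      ∀ gplus : E n,
        (∀ i, gplus i = if Real.sqrt εg < |x i| then
            gvec n f lam (x + θ ^ j • d) i else 0) →
        η * min (min ((4 / (Real.sqrt ((ζ + 4 * τh) ^ 2 + 8 * LH) + (ζ + 4 * τh))) ^ 2)
              (9 * (1 - ζ - 2 * η) ^ 2 * θ ^ 2 / LH ^ 2))
            (min (θ ^ 2) ((1 - ζ) ^ 2 * θ ^ 2 / (4 * max (LH / 3) (2 * η) ^ 2))) *
          min (min (‖gplus‖ ^ 2 * εh⁻¹) (εh ^ 3)) (εg * εh) ≤
        phi n f lam x - phi n f lam (x + θ ^ j • d) := by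
  classical
  have hsg : (0:ℝ) ≤ Real.sqrt εg := Real.sqrt_nonneg _
  have hmpos : 0 < τ * ‖gbar‖ ^ δ := lt_of_lt_of_le (by linarith [hεh.1]) hτlo
  -- d ≠ 0
  have hdne : d ≠ 0 := by
    intro hd
    apply hgbar0
    have hr0 : rhat = 0 := by
      have : ‖rhat‖ ≤ 0 := by simpa [hd] using hc
      exact norm_le_zero_iff.mp this
    ext i
    by_cases hi : Real.sqrt εg < |x i|
    · have h1 : rhat i = 0 := by rw [hr0]; simp
      rw [hrhat i, if_pos hi] at h1
      have hdi : d i = 0 := by rw [hd]; simp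
      have hHd : hess n f x d = 0 := by rw [hd]; simp
      rw [hHd, hdi] at h1
      have hg1 : gbar i = 0 := by simpa using h1
      simpa using hg1
    · rw [hgbar i, if_neg hi]; simp
  have hdpos : 0 < ‖d‖ := norm_pos_iff.mpr hdne
  -- inner product identity
  have hinner : ⟪gbar, d⟫ = ⟪rhat, d⟫ - ⟪d, hess n f x d⟫ - (τ * ‖gbar‖ ^ δ) * ‖d‖ ^ 2 := by
    have hterm : ∀ i, rhat i * d i =
        (hess n f x d) i * d i + (τ * ‖gbar‖ ^ δ) * (d i * d i) + gbar i * d i := by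
      intro i
      by_cases hi : Real.sqrt εg < |x i|
      · rw [hrhat i, if_pos hi]; ring
      · rw [hrhat i, if_neg hi, hd0 i (le_of_not_gt hi)]; ring
    have hsum : ⟪rhat, d⟫ = ⟪(hess n f x d : E n), d⟫ + (τ * ‖gbar‖ ^ δ) * ⟪d, d⟫ + ⟪gbar, d⟫ := by
      rw [inner_sum', inner_sum', inner_sum', inner_sum', Finset.mul_sum,
        ← Finset.sum_add_distrib, ← Finset.sum_add_distrib]
      exact Finset.sum_congr rfl fun i _ => hterm i
    have h2 : ⟪(hess n f x d : E n), d⟫ = ⟪d, (hess n f x d : E n)⟫ := real_inner_comm _ _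
    have h3 : (τ * ‖gbar‖ ^ δ) * ⟪(d : E n), d⟫ = (τ * ‖gbar‖ ^ δ) * ‖d‖^2 := by
      rw [real_inner_self_eq_norm_sq d]
    linarith [hsum, h2, h3]
  -- key descent lemma
  have key : ∀ α : ℝ, 0 < α → α ≤ 1 → (∀ i, Real.sqrt εg < |x i| → α * |d i| ≤ |x i|) →
      phi n f lam (x + α • d) - phi n f lam x ≤
        α * εh * ‖d‖ ^ 2 * (ζ/2 - 1 - α/2) + LH/6 * α^3 * ‖d‖^3 := by
    intro α hα0 hα1 hnf
    have hcoord : ∀ i, (x + α • d) i = x i + α * d i := fun i => rfl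
    have hyx : (x + α • d) - x = α • d := add_sub_cancel_left x (α • d)
    have hf := hcubic x (x + α • d)
    rw [hyx] at hf
    have hs1 : ⟪gradient f x, α • d⟫ = α * ⟪gradient f x, d⟫ := real_inner_smul_right _ _ _
    have hs2 : ⟪α • d, hess n f x (α • d)⟫ = α^2 * ⟪d, hess n f x d⟫ := by
      rw [map_smul, real_inner_smul_left, real_inner_smul_right]; ring
    have hs3 : ‖α • d‖ = α * ‖d‖ := by
      rw [norm_smul, Real.norm_eq_abs, abs_of_pos hα0]
    rw [hs1, hs2, hs3] at hf
    have hcube : (α * ‖d‖)^3 = α^3 * ‖d‖^3 := by ring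
    rw [hcube] at hf
    have hl1 : ∀ i, lam * |(x + α • d) i| - lam * |x i| =
        α * ((gbar i - gradient f x i) * d i) := by
      intro i
      rw [hcoord i]
      by_cases hdi : d i = 0
      · rw [hdi]; ring_nf
      · have hiJ : Real.sqrt εg < |x i| := by
          by_contra hcon
          exact hdi (hd0 i (le_of_not_gt hcon))
        have hxne : x i ≠ 0 := by
          intro h0
          rw [h0, abs_zero] at hiJ
          linarith
        have hflip := hnf i hiJ
        rcases lt_or_gt_of_ne hxne with hneg | hpos
        · have habs : |x i| = -(x i) := abs_of_neg hneg
          have h1 : x i + α * d i ≤ 0 := by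
            have hαd : α * d i ≤ α * |d i| :=
              mul_le_mul_of_nonneg_left (le_abs_self _) (le_of_lt hα0)
            linarith [hflip]
          have hg : gbar i = gradient f x i - lam := by
            rw [hgbar i, if_pos hiJ]
            simp only [gvec, WithLp.ofLp_toLp]
            rw [if_neg (by linarith : ¬ (0:ℝ) < x i), if_pos hneg]
          rw [abs_of_nonpos h1, habs, hg]; ring
        · have habs : |x i| = x i := abs_of_pos hpos
          have h1 : (0:ℝ) ≤ x i + α * d i := by
            have hαd : α * (-|d i|) ≤ α * d i :=
              mul_le_mul_of_nonneg_left (neg_abs_le _) (le_of_lt hα0)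
            linarith [hflip]
          have hg : gbar i = gradient f x i + lam := by
            rw [hgbar i, if_pos hiJ]
            simp only [gvec, WithLp.ofLp_toLp]
            rw [if_pos hpos]
          rw [abs_of_nonneg h1, habs, hg]; ring
    have hl1sum : lam * (∑ i, |(x + α • d) i|) - lam * (∑ i, |x i|) =
        α * (⟪gbar, d⟫ - ⟪gradient f x, d⟫) := by
      rw [inner_sum', inner_sum', Finset.mul_sum, Finset.mul_sum,
        ← Finset.sum_sub_distrib, ← Finset.sum_sub_distrib, Finset.mul_sum]
      exact Finset.sum_congr rfl fun i _ => by rw [hl1 i]; ring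
    have hφ : phi n f lam (x + α • d) - phi n f lam x ≤
        α * ⟪gbar, d⟫ + α^2/2 * ⟪d, hess n f x d⟫ + LH/6 * α^3 * ‖d‖^3 := by
      simp only [phi]
      linarith [hf, hl1sum]
    have hCS : ⟪rhat, d⟫ ≤ ζ/2 * εh * ‖d‖^2 := by
      calc ⟪rhat, d⟫ ≤ ‖rhat‖ * ‖d‖ := real_inner_le_norm _ _
        _ ≤ (ζ/2 * εh * ‖d‖) * ‖d‖ := mul_le_mul_of_nonneg_right hc (norm_nonneg d)
        _ = ζ/2 * εh * ‖d‖^2 := by ring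
    have t1 : 0 ≤ (α - α^2/2) * ((⟪d, hess n f x d⟫ + (τ * ‖gbar‖ ^ δ) * ‖d‖^2) - εh * ‖d‖^2) :=
      mul_nonneg (by
        have := mul_le_mul_of_nonneg_left hα1 (le_of_lt hα0)
        linarith [this]) (by linarith [ha])
    have t2 : 0 ≤ (α^2/2) * (((τ * ‖gbar‖ ^ δ) - 2*εh) * ‖d‖^2) :=
      mul_nonneg (by positivity) (mul_nonneg (by linarith [hτlo]) (sq_nonneg _))
    have t3 : 0 ≤ α * (ζ/2 * εh * ‖d‖^2 - ⟪rhat, d⟫) := mul_nonneg (le_of_lt hα0) (by linarith)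
    have hG : α * ⟪gbar, d⟫ =
        α * (⟪rhat, d⟫ - ⟪d, hess n f x d⟫ - (τ * ‖gbar‖ ^ δ) * ‖d‖ ^ 2) := by rw [hinner]
    linarith [hφ, t1, t2, t3, hG]
  -- existence of a successful step
  have hex : ∃ j : ℕ, phi n f lam (x + θ ^ j • d) <
      phi n f lam x - η * θ ^ (2 * j) * εh * ‖d‖ ^ 2 := by
    have hδ0pos : 0 < min (Real.sqrt εg / ‖d‖) (εh / (1 + LH * ‖d‖)) := by
      apply lt_min
      · exact div_pos (Real.sqrt_pos.mpr hεg.1) hdpos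
      · apply div_pos hεh.1
        have := mul_nonneg (le_of_lt hLH) (norm_nonneg d)
        linarith
    obtain ⟨j0, hj0⟩ := exists_pow_lt_of_lt_one hδ0pos hθ.2
    refine ⟨j0, ?_⟩
    set α := θ ^ j0 with hα
    have hα0 : 0 < α := pow_pos hθ.1 _
    have hα1 : α ≤ 1 := pow_le_one₀ (le_of_lt hθ.1) (le_of_lt hθ.2)
    have hnf : ∀ i, Real.sqrt εg < |x i| → α * |d i| ≤ |x i| := by
      intro i hi
      have h1 : α * |d i| ≤ α * ‖d‖ :=
        mul_le_mul_of_nonneg_left (abs_coord_le_norm d i) (le_of_lt hα0)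
      have h2 : α * ‖d‖ < Real.sqrt εg := by
        have h3 := lt_of_lt_of_le hj0 (min_le_left _ _)
        rw [lt_div_iff₀ hdpos] at h3
        linarith
      linarith
    have hk := key α hα0 hα1 hnf
    have hLHd : LH * α * ‖d‖ < εh := by
      have h3 := lt_of_lt_of_le hj0 (min_le_right _ _)
      rw [lt_div_iff₀ (by
        have := mul_nonneg (le_of_lt hLH) (norm_nonneg d)
        linarith : (0:ℝ) < 1 + LH * ‖d‖)] at h3
      linarith [hα0, h3]
    have hpow : θ ^ (2 * j0) = α^2 := by rw [hα, ← pow_mul, mul_comm]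
    rw [hpow]
    have e1 : LH/6 * α^3 * ‖d‖^3 < εh * α^2 * ‖d‖^2 / 6 := by
      have := mul_lt_mul_of_pos_right hLHd
        (show (0:ℝ) < α^2 * ‖d‖^2 / 6 by positivity)
      linarith [this]
    have hq : ζ/2 - 1 - α/2 + α/6 + η * α < 0 := by
      have := mul_le_mul_of_nonneg_left hα1 (le_of_lt hη.1)
      linarith [hη.2, hα0, hζ.1, this]
    have hgoal : α * εh * ‖d‖ ^ 2 * (ζ/2 - 1 - α/2) + LH/6 * α^3 * ‖d‖^3 <
        - (η * α^2 * εh * ‖d‖^2) := by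
      have hA : (0:ℝ) ≤ α * εh * ‖d‖^2 :=
        le_of_lt (mul_pos (mul_pos hα0 hεh.1) (pow_pos hdpos 2))
      have hmul := mul_le_mul_of_nonneg_left (le_of_lt hq) hA
      linarith [e1, hmul]
    linarith [hk, hgoal]
  refine ⟨Nat.find hex, Nat.find_spec hex, fun j' hj' => Nat.find_min hex hj', ?_⟩
  set j := Nat.find hex with hjdef
  intro gplus hgplus
  have hjP := Nat.find_spec hex
  rw [← hjdef] at hjP
  have hsucc : η * θ ^ (2*j) * εh * ‖d‖ ^ 2 < phi n f lam x - phi n f lam (x + θ ^ j • d) := by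
    linarith
  have hM1 : (0:ℝ) ≤ min (min (‖gplus‖ ^ 2 * εh⁻¹) (εh ^ 3)) (εg * εh) := by
    have h1 : (0:ℝ) ≤ ‖gplus‖ ^ 2 * εh⁻¹ :=
      mul_nonneg (sq_nonneg _) (inv_nonneg.mpr (le_of_lt hεh.1))
    have h2 : (0:ℝ) ≤ εh ^ 3 := pow_nonneg (le_of_lt hεh.1) 3
    have h3 : (0:ℝ) ≤ εg * εh := mul_nonneg (le_of_lt hεg.1) (le_of_lt hεh.1)
    exact le_min (le_min h1 h2) h3
  suffices hmain : (min (min ((4 / (Real.sqrt ((ζ + 4 * τh) ^ 2 + 8 * LH) + (ζ + 4 * τh))) ^ 2)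
              (9 * (1 - ζ - 2 * η) ^ 2 * θ ^ 2 / LH ^ 2))
            (min (θ ^ 2) ((1 - ζ) ^ 2 * θ ^ 2 / (4 * max (LH / 3) (2 * η) ^ 2)))) *
          (min (min (‖gplus‖ ^ 2 * εh⁻¹) (εh ^ 3)) (εg * εh)) ≤ θ ^ (2*j) * εh * ‖d‖ ^ 2 by
    have h2 := mul_le_mul_of_nonneg_left hmain (le_of_lt hη.1)
    calc η * min (min ((4 / (Real.sqrt ((ζ + 4 * τh) ^ 2 + 8 * LH) + (ζ + 4 * τh))) ^ 2)
              (9 * (1 - ζ - 2 * η) ^ 2 * θ ^ 2 / LH ^ 2))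
            (min (θ ^ 2) ((1 - ζ) ^ 2 * θ ^ 2 / (4 * max (LH / 3) (2 * η) ^ 2))) *
          min (min (‖gplus‖ ^ 2 * εh⁻¹) (εh ^ 3)) (εg * εh)
        = η * (min (min ((4 / (Real.sqrt ((ζ + 4 * τh) ^ 2 + 8 * LH) + (ζ + 4 * τh))) ^ 2)
              (9 * (1 - ζ - 2 * η) ^ 2 * θ ^ 2 / LH ^ 2))
            (min (θ ^ 2) ((1 - ζ) ^ 2 * θ ^ 2 / (4 * max (LH / 3) (2 * η) ^ 2))) *
          min (min (‖gplus‖ ^ 2 * εh⁻¹) (εh ^ 3)) (εg * εh)) := by ring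
      _ ≤ η * (θ ^ (2*j) * εh * ‖d‖ ^ 2) := h2
      _ ≤ phi n f lam x - phi n f lam (x + θ ^ j • d) := by linarith [hsucc]
  have hjmin : ∀ jj, jj < j → ¬ (phi n f lam (x + θ ^ jj • d) <
      phi n f lam x - η * θ ^ (2*jj) * εh * ‖d‖ ^ 2) := by
    intro jj hlt
    rw [hjdef] at hlt
    exact Nat.find_min hex hlt
  -- constants
  set A0 := ζ + 4 * τh with hA0
  set S := Real.sqrt (A0 ^ 2 + 8 * LH) with hS
  have hA0pos : 0 < A0 := by rw [hA0]; linarith [hζ.1, hτh]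
  have hSnn : 0 ≤ S := Real.sqrt_nonneg _
  have hSsq : S ^ 2 = A0 ^ 2 + 8 * LH := Real.sq_sqrt (by positivity)
  have hSA : 0 < S + A0 := by linarith
  have hKpos : 0 < (S + A0) / 4 := by linarith
  set K := (S + A0) / 4 with hK
  have hLHK : LH = K * (2 * K - A0) := by rw [hK]; linear_combination (-1/8 : ℝ) * hSsq
  have hc1K : (4 / (S + A0)) ^ 2 = 1 / K ^ 2 := by
    rw [hK]; field_simp
  set Cm := min (min ((4 / (S + A0)) ^ 2) (9 * (1 - ζ - 2 * η) ^ 2 * θ ^ 2 / LH ^ 2))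
      (min (θ ^ 2) ((1 - ζ) ^ 2 * θ ^ 2 / (4 * max (LH / 3) (2 * η) ^ 2))) with hCm
  set Mm := min (min (‖gplus‖ ^ 2 * εh⁻¹) (εh ^ 3)) (εg * εh) with hMm
  have hCc1 : Cm ≤ (4 / (S + A0)) ^ 2 := by
    rw [hCm]; exact (min_le_left _ _).trans (min_le_left _ _)
  have hCc2 : Cm ≤ 9 * (1 - ζ - 2 * η) ^ 2 * θ ^ 2 / LH ^ 2 := by
    rw [hCm]; exact (min_le_left _ _).trans (min_le_right _ _)
  have hCθ : Cm ≤ θ ^ 2 := by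
    rw [hCm]; exact (min_le_right _ _).trans (min_le_left _ _)
  have hMg : Mm ≤ ‖gplus‖ ^ 2 * εh⁻¹ := by
    rw [hMm]; exact (min_le_left _ _).trans (min_le_left _ _)
  have hMh : Mm ≤ εh ^ 3 := by
    rw [hMm]; exact (min_le_left _ _).trans (min_le_right _ _)
  have hMge : Mm ≤ εg * εh := by rw [hMm]; exact min_le_right _ _
  rcases Nat.eq_zero_or_pos j with hj0 | hjpos
  · -- case j = 0
    rw [hj0] at hgplus ⊢
    simp only [Nat.mul_zero, pow_zero, one_mul, one_smul] at hgplus ⊢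
    rcases le_or_gt εh (K * ‖d‖) with hdK | hdK
    · have h1 : Cm * Mm ≤ (4 / (S + A0)) ^ 2 * εh ^ 3 :=
        mul_le_mul hCc1 hMh hM1 (by positivity)
      have h2 : (4 / (S + A0)) ^ 2 * εh ^ 3 ≤ εh * ‖d‖ ^ 2 := by
        rw [hc1K, div_mul_eq_mul_div, one_mul, div_le_iff₀ (pow_pos hKpos 2)]
        have hdd := mul_le_mul hdK hdK (le_of_lt hεh.1)
          (mul_nonneg (le_of_lt hKpos) (norm_nonneg d))
        have := mul_le_mul_of_nonneg_left hdd (le_of_lt hεh.1)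
        linarith [this]
      linarith
    · by_cases hflip : ∃ i, Real.sqrt εg < |x i| ∧ |x i| ≤ |d i|
      · obtain ⟨i, hiJ, hile⟩ := hflip
        have hεgd : εg < ‖d‖ ^ 2 := by
          have hs : Real.sqrt εg < ‖d‖ := lt_of_lt_of_le (lt_of_lt_of_le hiJ hile)
            (abs_coord_le_norm d i)
          have hss := mul_lt_mul' (le_of_lt hs) hs hsg hdpos
          linarith [hss, Real.sq_sqrt (le_of_lt hεg.1)]
        have hCm1 : Cm ≤ 1 := hCθ.trans (by
          have := mul_le_mul_of_nonneg_left (le_of_lt hθ.2) (le_of_lt hθ.1)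
          linarith [this, hθ.2])
        have h1 : Cm * Mm ≤ 1 * (εg * εh) := mul_le_mul hCm1 hMge hM1 zero_le_one
        have h2 := mul_le_mul_of_nonneg_right (le_of_lt hεgd) (le_of_lt hεh.1)
        linarith [h1, h2]
      · push_neg at hflip
        have hcompo : ∀ i, |(gplus - (rhat - (τ * ‖gbar‖ ^ δ) • d)) i| ≤
            |(gradient f (x + d) - gradient f x - hess n f x d) i| := by
          intro i
          have hco1 : (gplus - (rhat - (τ * ‖gbar‖ ^ δ) • d)) i
              = gplus i - (rhat i - (τ * ‖gbar‖ ^ δ) * d i) := rfl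
          have hco2 : (gradient f (x + d) - gradient f x - hess n f x d) i
              = gradient f (x + d) i - gradient f x i - hess n f x d i := rfl
          rw [hco1, hco2]
          by_cases hi : Real.sqrt εg < |x i|
          · have hfl := hflip i hi
            have hxd : (x + d) i = x i + d i := rfl
            rw [hgplus i, if_pos hi, hrhat i, if_pos hi, hgbar i, if_pos hi]
            rcases lt_trichotomy (x i) 0 with hneg | hzero | hpos
            · have habs : |x i| = -(x i) := abs_of_neg hneg
              have h1 : (x + d) i < 0 := by
                rw [hxd]; linarith [le_abs_self (d i), hfl]
              have hgv2 : gvec n f lam (x + d) i = gradient f (x + d) i - lam := by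
                simp only [gvec, WithLp.ofLp_toLp]
                rw [if_neg (by linarith : ¬ (0:ℝ) < (x + d) i), if_pos h1]
              have hgv1 : gvec n f lam x i = gradient f x i - lam := by
                simp only [gvec, WithLp.ofLp_toLp]
                rw [if_neg (by linarith : ¬ (0:ℝ) < x i), if_pos hneg]
              rw [hgv2, hgv1]
              apply le_of_eq
              congr 1
              ring
            · exfalso; rw [hzero, abs_zero] at hi; linarith
            · have habs : |x i| = x i := abs_of_pos hpos
              have h1 : (0:ℝ) < (x + d) i := by
                rw [hxd]; linarith [neg_abs_le (d i), hfl]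
              have hgv2 : gvec n f lam (x + d) i = gradient f (x + d) i + lam := by
                simp only [gvec, WithLp.ofLp_toLp]
                rw [if_pos h1]
              have hgv1 : gvec n f lam x i = gradient f x i + lam := by
                simp only [gvec, WithLp.ofLp_toLp]
                rw [if_pos hpos]
              rw [hgv2, hgv1]
              apply le_of_eq
              congr 1
              ring
          · rw [hgplus i, if_neg hi, hrhat i, if_neg hi, hd0 i (le_of_not_gt hi)]
            simpa using abs_nonneg (gradient f (x + d) i - gradient f x i - hess n f x d i)
        have he : ‖gradient f (x + d) - gradient f x - hess n f x d‖ ≤ LH/2 * ‖d‖ ^ 2 := by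
          have h1 := htaylor x (x + d)
          rw [add_sub_cancel_left] at h1
          exact h1
        have hwn : ‖gplus - (rhat - (τ * ‖gbar‖ ^ δ) • d)‖ ≤ LH/2 * ‖d‖ ^ 2 :=
          le_trans (norm_le_norm_of_abs_le hcompo) he
        have hgpn : ‖gplus‖ ≤ K * εh * ‖d‖ := by
          have h1 : ‖gplus‖ ≤ ‖rhat - (τ * ‖gbar‖ ^ δ) • d‖ + LH/2 * ‖d‖ ^ 2 := by
            calc ‖gplus‖ = ‖(rhat - (τ * ‖gbar‖ ^ δ) • d) +
                  (gplus - (rhat - (τ * ‖gbar‖ ^ δ) • d))‖ := by congr 1; abel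
              _ ≤ ‖rhat - (τ * ‖gbar‖ ^ δ) • d‖ + ‖gplus - (rhat - (τ * ‖gbar‖ ^ δ) • d)‖ :=
                  norm_add_le _ _
              _ ≤ _ := by linarith
          have h2 : ‖rhat - (τ * ‖gbar‖ ^ δ) • d‖ ≤ ‖rhat‖ + (τ * ‖gbar‖ ^ δ) * ‖d‖ := by
            refine le_trans (norm_sub_le _ _) ?_
            rw [norm_smul, Real.norm_eq_abs, abs_of_pos hmpos]
          have h3 : (τ * ‖gbar‖ ^ δ) * ‖d‖ ≤ 2 * τh * εh * ‖d‖ :=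
            mul_le_mul_of_nonneg_right hτhi (norm_nonneg d)
          have h4 : LH/2 * ‖d‖ ^ 2 ≤ LH/(2*K) * εh * ‖d‖ := by
            have hid : LH/(2*K) * εh * ‖d‖ - LH/2 * ‖d‖ ^ 2
                = (LH * ‖d‖) / (2*K) * (εh - K * ‖d‖) := by
              field_simp
            have hnn : 0 ≤ (LH * ‖d‖) / (2*K) * (εh - K * ‖d‖) :=
              mul_nonneg (div_nonneg (mul_nonneg (le_of_lt hLH) (norm_nonneg d))
                (by linarith)) (by linarith)
            linarith [hid, hnn]
          have hsc : ζ/2 * εh * ‖d‖ + 2 * τh * εh * ‖d‖ + LH/(2*K) * εh * ‖d‖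
              = K * εh * ‖d‖ := by
            have h6 : LH/(2*K) = K - A0/2 := by
              rw [hLHK]; field_simp
            rw [h6, hA0]; ring
          linarith [hc, h1, h2, h3, h4, hsc]
        have hgp2 : Mm ≤ K ^ 2 * εh * ‖d‖ ^ 2 := by
          refine hMg.trans ?_
          have h7 : ‖gplus‖ ^ 2 ≤ K ^ 2 * εh ^ 2 * ‖d‖ ^ 2 := by
            have := mul_self_le_mul_self (norm_nonneg gplus) hgpn
            linarith [this]
          have h8 : ‖gplus‖ ^ 2 * εh⁻¹ ≤ (K ^ 2 * εh ^ 2 * ‖d‖ ^ 2) * εh⁻¹ :=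
            mul_le_mul_of_nonneg_right h7 (inv_nonneg.mpr (le_of_lt hεh.1))
          have h9 : (K ^ 2 * εh ^ 2 * ‖d‖ ^ 2) * εh⁻¹ = K ^ 2 * εh * ‖d‖ ^ 2 := by
            rw [show (K ^ 2 * εh ^ 2 * ‖d‖ ^ 2) * εh⁻¹ = K ^ 2 * εh * ‖d‖ ^ 2 * (εh * εh⁻¹)
              from by ring, mul_inv_cancel₀ (ne_of_gt hεh.1), mul_one]
          linarith
        have h10 : Cm * Mm ≤ (4 / (S + A0)) ^ 2 * (K ^ 2 * εh * ‖d‖ ^ 2) :=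
          mul_le_mul hCc1 hgp2 hM1 (by positivity)
        have h11 : (4 / (S + A0)) ^ 2 * (K ^ 2 * εh * ‖d‖ ^ 2) = εh * ‖d‖ ^ 2 := by
          rw [hc1K]
          field_simp
        linarith
  · -- case j ≥ 1
    obtain ⟨k, hk⟩ : ∃ k, j = k + 1 := ⟨j - 1, (Nat.succ_pred_eq_of_pos hjpos).symm⟩
    have hfail := hjmin k (by omega)
    rw [not_lt] at hfail
    set β := θ ^ k with hβ
    have hβ0 : 0 < β := pow_pos hθ.1 _
    have hβ1 : β ≤ 1 := pow_le_one₀ (le_of_lt hθ.1) (le_of_lt hθ.2)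
    have hb2 : θ ^ (2*k) = β ^ 2 := by rw [hβ, ← pow_mul, Nat.mul_comm k 2]
    have hpw : θ ^ (2*j) = θ ^ 2 * β ^ 2 := by
      rw [hk, hβ, ← pow_mul, ← pow_add]
      congr 1
      ring
    rw [hpw]
    by_cases hflip : ∃ i, Real.sqrt εg < |x i| ∧ |x i| ≤ β * |d i|
    · obtain ⟨i, hiJ, hile⟩ := hflip
      have hεgd : εg < β ^ 2 * ‖d‖ ^ 2 := by
        have t := mul_le_mul_of_nonneg_left (abs_coord_le_norm d i) (le_of_lt hβ0)
        have hs : Real.sqrt εg < β * ‖d‖ := by linarith [hiJ, hile, t]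
        have hss := mul_lt_mul' (le_of_lt hs) hs hsg (mul_pos hβ0 hdpos)
        linarith [hss, Real.sq_sqrt (le_of_lt hεg.1)]
      have h1 : Cm * Mm ≤ θ ^ 2 * (εg * εh) := mul_le_mul hCθ hMge hM1 (sq_nonneg θ)
      have h2 : θ ^ 2 * (εg * εh) ≤ θ ^ 2 * β ^ 2 * εh * ‖d‖ ^ 2 := by
        have := mul_le_mul_of_nonneg_left (le_of_lt hεgd)
          (mul_nonneg (sq_nonneg θ) (le_of_lt hεh.1))
        linarith [this]
      linarith
    · push_neg at hflip
      have hnf : ∀ i, Real.sqrt εg < |x i| → β * |d i| ≤ |x i| :=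
        fun i hi => le_of_lt (hflip i hi)
      have hkey := key β hβ0 hβ1 hnf
      rw [hb2] at hfail
      have hcomb : - (η * β ^ 2 * εh * ‖d‖ ^ 2) ≤
          β * εh * ‖d‖ ^ 2 * (ζ/2 - 1 - β/2) + LH/6 * β ^ 3 * ‖d‖ ^ 3 := by
        linarith [hfail, hkey]
      have hT1 : 0 ≤ (1/2 - η) * β ^ 2 * εh * ‖d‖ ^ 2 :=
        mul_nonneg (mul_nonneg (mul_nonneg
          (by linarith [hη.2, hζ.1] : (0:ℝ) ≤ 1/2 - η) (sq_nonneg β))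
          (le_of_lt hεh.1)) (sq_nonneg _)
      have hT2 : 0 ≤ β * εh * ‖d‖ ^ 2 :=
        mul_nonneg (mul_nonneg (le_of_lt hβ0) (le_of_lt hεh.1)) (sq_nonneg _)
      have h2 : 3 * (1 - ζ) * εh * (β * ‖d‖ ^ 2) ≤ (LH * β ^ 2 * ‖d‖) * (β * ‖d‖ ^ 2) := by
        linarith [hcomb, hT1, hT2]
      have h1 : 3 * (1 - ζ) * εh ≤ LH * β ^ 2 * ‖d‖ :=
        le_of_mul_le_mul_right h2 (mul_pos hβ0 (pow_pos hdpos 2))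
      have hstep : Cm * Mm ≤ (9 * (1 - ζ - 2 * η) ^ 2 * θ ^ 2 / LH ^ 2) * εh ^ 3 :=
        mul_le_mul hCc2 hMh hM1 (by positivity)
      have hfin : (9 * (1 - ζ - 2 * η) ^ 2 * θ ^ 2 / LH ^ 2) * εh ^ 3 ≤
          θ ^ 2 * β ^ 2 * εh * ‖d‖ ^ 2 := by
        rw [div_mul_eq_mul_div, div_le_iff₀ (pow_pos hLH 2)]
        have hnn1 : (0:ℝ) ≤ 3 * (1 - ζ) * εh := by
          have := mul_nonneg (by linarith [hζ.2] : (0:ℝ) ≤ 1 - ζ) (le_of_lt hεh.1)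
          linarith [this]
        have u1 : 9 * (1 - ζ) ^ 2 * εh ^ 2 ≤ LH ^ 2 * β ^ 4 * ‖d‖ ^ 2 := by
          have := mul_le_mul h1 h1 hnn1 (hnn1.trans h1)
          linarith [this]
        have u2 : (1 - ζ - 2 * η) ^ 2 ≤ (1 - ζ) ^ 2 := by
          have := mul_self_le_mul_self (by linarith [hη.1, hη.2] : (0:ℝ) ≤ 1 - ζ - 2 * η)
            (by linarith [hη.1] : 1 - ζ - 2 * η ≤ 1 - ζ)
          linarith [this]
        have hb21 : β ^ 2 ≤ 1 := by
          have := mul_le_mul_of_nonneg_left hβ1 (le_of_lt hβ0)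
          linarith [this, hβ1]
        have u3 : β ^ 4 ≤ β ^ 2 := by
          have := mul_le_mul_of_nonneg_left hb21 (sq_nonneg β)
          linarith [this]
        have w1 := mul_le_mul_of_nonneg_left u2
          (mul_nonneg (mul_nonneg (by norm_num : (0:ℝ) ≤ 9) (sq_nonneg θ))
            (pow_nonneg (le_of_lt hεh.1) 3))
        have w2 := mul_le_mul_of_nonneg_left u1
          (mul_nonneg (sq_nonneg θ) (le_of_lt hεh.1))
        have w3 := mul_le_mul_of_nonneg_left u3
          (mul_nonneg (mul_nonneg (mul_nonneg (sq_nonneg θ) (le_of_lt hεh.1)) (sq_nonneg LH))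
            (sq_nonneg ‖d‖))
        linarith [w1, w2, w3]
      linarith
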